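/- Let b be a nonzero rational number and let f_b : ℚ → ℚ be given by f_b(z) = z + b/z. Then the set S = {z : ℚ | z ≠ 0 and z is preperiodic under f_b} is finite and its cardinality is 0, 2, or 4. (In the paper's formulation on P¹, which additionally counts the preperiodic points 0 and ∞: the map z ↦ z + b/z has exactly 2, 4, or 6 rational preperiodic points.) -/

import Mathlib

open Function

/-- A prime is not a square of a rational. -/
lemma prime_not_rat_sq (p : ℕ) (hp : p.Prime) (r : ℚ) (h : r ^ 2 = (p : ℚ)) : False := by
  haveI : Fact p.Prime := ⟨hp⟩
  have hr : r ≠ 0 := by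
    rintro rfl
    simp at h
    exact hp.ne_zero (by exact_mod_cast h.symm)
  have h1 : padicValRat p (r ^ 2) = padicValRat p ((p : ℚ)) := by rw [h]
  rw [padicValRat.pow r, padicValRat.self hp.one_lt] at h1
  omega

/-- A nonzero rational with zero valuation at every prime is `±1`. -/
lemma eq_one_or_neg_one_of_valuations (q : ℚ) (hq : q ≠ 0)
    (h : ∀ p : ℕ, p.Prime → padicValRat p q = 0) : q = 1 ∨ q = -1 := by
  have hnum : q.num ≠ 0 := Rat.num_ne_zero.2 hq
  have hnumAbs : q.num.natAbs ≠ 0 := Int.natAbs_ne_zero.2 hnum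
  have hden : q.den ≠ 0 := q.den_nz
  have key : ∀ p : ℕ, p.Prime → ¬ p ∣ q.num.natAbs ∧ ¬ p ∣ q.den := by
    intro p pp
    haveI : Fact p.Prime := ⟨pp⟩
    have hv := h p pp
    rw [padicValRat] at hv
    rw [padicValInt] at hv
    have hcop : Nat.Coprime q.num.natAbs q.den := q.reduced
    constructor
    · intro hdvd
      have h1 : 1 ≤ padicValNat p q.num.natAbs :=
        one_le_padicValNat_of_dvd hnumAbs hdvd
      have h2 : 1 ≤ padicValNat p q.den := by omega
      have hdvd2 : p ∣ q.den := dvd_of_one_le_padicValNat h2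
      exact pp.one_lt.ne' (Nat.eq_one_of_dvd_coprimes hcop hdvd hdvd2)
    · intro hdvd
      have h1 : 1 ≤ padicValNat p q.den :=
        one_le_padicValNat_of_dvd hden hdvd
      have h2 : 1 ≤ padicValNat p q.num.natAbs := by omega
      have hdvd2 : p ∣ q.num.natAbs := dvd_of_one_le_padicValNat h2
      exact pp.one_lt.ne' (Nat.eq_one_of_dvd_coprimes hcop hdvd2 hdvd)
  have hden1 : q.den = 1 :=
    Nat.eq_one_iff_not_exists_prime_dvd.2 fun p pp => (key p pp).2
  have hnum1 : q.num.natAbs = 1 :=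
    Nat.eq_one_iff_not_exists_prime_dvd.2 fun p pp => (key p pp).1
  have := Rat.coe_int_num_of_den_eq_one hden1
  rcases Int.natAbs_eq_iff.mp hnum1 with h' | h' <;> rw [h'] at this <;> simp at this
  · exact Or.inl this.symm
  · exact Or.inr this.symm


section
variable (b : ℚ)

local notation "g" => (fun w : ℚ => w + b / w)

lemma g_zero : (fun w : ℚ => w + b / w) 0 = 0 := by simp

lemma g_iter_zero (n : ℕ) : (fun w : ℚ => w + b / w)^[n] (0:ℚ) = 0 := by
  induction n with
  | zero => rfl
  | succ n ih => rw [iterate_succ_apply', ih]; norm_num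

/-- along a cycle, all points are nonzero -/
lemma cycle_ne_zero {k : ℕ} {z : ℚ} (hk : 1 ≤ k) (hz : z ≠ 0)
    (hc : (fun w : ℚ => w + b / w)^[k] z = z) (i : ℕ) :
    (fun w : ℚ => w + b / w)^[i] z ≠ 0 := by
  intro h0
  apply hz
  have hki : i ≤ k * i + k := by nlinarith
  have h1 : ∀ m : ℕ, (fun w : ℚ => w + b / w)^[k * m] z = z := by
    intro m
    induction m with
    | zero => simp
    | succ m ih => rw [Nat.mul_succ, iterate_add_apply, hc, ih]
  have h2 : (fun w : ℚ => w + b / w)^[k * (i+1)] z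
      = (fun w : ℚ => w + b / w)^[k * (i+1) - i] ((fun w : ℚ => w + b / w)^[i] z) := by
    rw [← iterate_add_apply]
    congr 1
    have : i ≤ k * (i+1) := by nlinarith
    omega
  rw [h1, h0, g_iter_zero] at h2
  exact h2


/-- valuation of `g x` when `2 v x < v b`: it stays `v x`. -/
lemma val_step_low (hb : b ≠ 0) (p : ℕ) [Fact p.Prime] {x : ℚ} (hx : x ≠ 0) (hgx : x + b / x ≠ 0)
    (h : 2 * padicValRat p x < padicValRat p b) :
    padicValRat p (x + b / x) = padicValRat p x := by
  have hdiv : b / x ≠ 0 := div_ne_zero hb hx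
  have hvd : padicValRat p (b / x) = padicValRat p b - padicValRat p x :=
    padicValRat.div hb hx
  exact padicValRat.add_eq_of_lt hgx hx hdiv (by omega)

/-- valuation of `g x` when `2 v x > v b`. -/
lemma val_step_high (hb : b ≠ 0) (p : ℕ) [Fact p.Prime] {x : ℚ} (hx : x ≠ 0) (hgx : x + b / x ≠ 0)
    (h : padicValRat p b < 2 * padicValRat p x) :
    padicValRat p (x + b / x) = padicValRat p b - padicValRat p x := by
  have hdiv : b / x ≠ 0 := div_ne_zero hb hx
  have hvd : padicValRat p (b / x) = padicValRat p b - padicValRat p x :=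
    padicValRat.div hb hx
  rw [add_comm] at hgx ⊢
  rw [padicValRat.add_eq_of_lt hgx hdiv hx (by omega), hvd]

/-- iterates preserve valuation in the stable (low) regime, provided no iterate vanishes -/
lemma val_iter_low (hb : b ≠ 0) (p : ℕ) [Fact p.Prime] {x : ℚ}
    (hnz : ∀ i, (fun w : ℚ => w + b / w)^[i] x ≠ 0)
    (h : 2 * padicValRat p x < padicValRat p b) (j : ℕ) :
    padicValRat p ((fun w : ℚ => w + b / w)^[j] x) = padicValRat p x := by
  induction j with
  | zero => simp
  | succ j ih =>
    rw [iterate_succ_apply']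
    have hx' := hnz j
    have hgx' : (fun w : ℚ => w + b / w)^[j] x + b / (fun w : ℚ => w + b / w)^[j] x ≠ 0 := by
      have := hnz (j+1)
      rwa [iterate_succ_apply'] at this
    calc padicValRat p ((fun w : ℚ => w + b / w)^[j] x + b / (fun w : ℚ => w + b / w)^[j] x)
        = padicValRat p ((fun w : ℚ => w + b / w)^[j] x) :=
          val_step_low b hb p hx' hgx' (by omega)
      _ = padicValRat p x := ih

/-- key lemma: along a cycle, the valuation is constant. -/
lemma val_cycle (hb : b ≠ 0) (p : ℕ) [Fact p.Prime] {k : ℕ} {z : ℚ} (hk : 1 ≤ k) (hz : z ≠ 0)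
    (hc : (fun w : ℚ => w + b / w)^[k] z = z) :
    padicValRat p (z + b / z) = padicValRat p z := by
  have hnz := cycle_ne_zero b hk hz hc
  have hnz1 : ∀ i, (fun w : ℚ => w + b / w)^[i] (z + b/z) ≠ 0 := by
    intro i
    have := hnz (i + 1)
    rwa [iterate_add_apply, iterate_one] at this
  have hg1 : z + b / z ≠ 0 := by have := hnz 1; simpa using this
  have hcyc1 : (fun w : ℚ => w + b / w)^[k-1] (z + b/z) = z := by
    have : (fun w : ℚ => w + b / w)^[k-1] ((fun w : ℚ => w + b / w)^[1] z)
        = (fun w : ℚ => w + b / w)^[k] z := by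
      rw [← iterate_add_apply]; congr 1; omega
    simpa [hc] using this
  rcases lt_trichotomy (2 * padicValRat p z) (padicValRat p b) with h | h | h
  · exact val_step_low b hb p hz hg1 h
  · -- boundary case
    by_cases hv : padicValRat p (z + b / z) = padicValRat p z
    · exact hv
    · exfalso
      have hdiv : b / z ≠ 0 := div_ne_zero hb hz
      have hvd : padicValRat p (b / z) = padicValRat p b - padicValRat p z :=
        padicValRat.div hb hz
      have hmin : min (padicValRat p z) (padicValRat p (b/z)) ≤ padicValRat p (z + b/z) :=
        padicValRat.min_le_padicValRat_add hg1
      have hgt : padicValRat p z < padicValRat p (z + b / z) := by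
        rw [hvd] at hmin
        omega
      -- next step drops below
      have hg2 : (z + b/z) + b / (z + b/z) ≠ 0 := by
        have := hnz1 1; simpa using this
      have h2 : padicValRat p ((z + b/z) + b / (z + b/z))
          = padicValRat p b - padicValRat p (z + b/z) :=
        val_step_high b hb p hg1 hg2 (by omega)
      rcases Nat.lt_or_ge k 2 with hk2 | hk2
      · -- k = 1 : z + b/z = z, contradiction with hv
        have hk1 : k = 1 := by omega
        rw [hk1, iterate_one] at hc
        exact hv (by rw [hc])
      · -- k ≥ 2: stable from the second iterate back to z
        have hnz2 : ∀ i, (fun w : ℚ => w + b / w)^[i] ((z + b/z) + b / (z + b/z)) ≠ 0 := by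
          intro i
          have := hnz (i + 2)
          have e : (fun w : ℚ => w + b / w)^[i+2] z
              = (fun w : ℚ => w + b / w)^[i] ((z + b/z) + b/(z + b/z)) := by
            simp only [show i+2 = i+1+1 from rfl, iterate_succ_apply]
          rwa [e] at this
        have hlow2 : 2 * padicValRat p ((z + b/z) + b / (z + b/z)) < padicValRat p b := by
          rw [h2]; omega
        have hstab := val_iter_low b hb p hnz2 hlow2 (k - 2)
        have hback : (fun w : ℚ => w + b / w)^[k-2] ((z + b/z) + b / (z + b/z)) = z := by
          have e : (fun w : ℚ => w + b / w)^[k-2] ((fun w : ℚ => w + b / w)^[2] z)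
              = (fun w : ℚ => w + b / w)^[k] z := by
            rw [← iterate_add_apply]; congr 1; omega
          rw [hc] at e
          have e2 : (fun w : ℚ => w + b / w)^[2] z = (z + b/z) + b / (z + b/z) := by
            simp only [show (2:ℕ) = 1+1 from rfl, iterate_succ_apply, iterate_zero_apply]
          rwa [e2] at e
        rw [hback] at hstab
        rw [h2] at hstab
        omega
  · -- high case: impossible along a cycle
    exfalso
    have hg2 : (z + b/z) + b / (z + b/z) ≠ 0 := by have := hnz1 1; simpa using this
    have h1 : padicValRat p (z + b / z) = padicValRat p b - padicValRat p z :=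
      val_step_high b hb p hz hg1 h
    have hlow : 2 * padicValRat p (z + b/z) < padicValRat p b := by rw [h1]; omega
    have hstab := val_iter_low b hb p hnz1 hlow (k - 1)
    rw [hcyc1, h1] at hstab
    omega

end

section
variable (b : ℚ)

lemma cycle_eq (hb : b ≠ 0) {k : ℕ} {z : ℚ} (hk : 1 ≤ k) (hz : z ≠ 0)
    (hc : (fun w : ℚ => w + b / w)^[k] z = z) : b = -2 * z^2 := by
  have hg1 : z + b / z ≠ 0 := by
    have := cycle_ne_zero b hk hz hc 1
    simpa using this
  have hval : ∀ p : ℕ, p.Prime → padicValRat p ((z + b/z)/z) = 0 := by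
    intro p pp
    haveI : Fact p.Prime := ⟨pp⟩
    rw [padicValRat.div hg1 hz, val_cycle b hb p hk hz hc, sub_self]
  rcases eq_one_or_neg_one_of_valuations _ (div_ne_zero hg1 hz) hval with h1 | h1
  · exfalso
    rw [div_eq_one_iff_eq hz] at h1
    have h2 : b / z = 0 := by linarith
    rcases div_eq_zero_iff.1 h2 with h | h
    · exact hb h
    · exact hz h
  · have h2 : z + b / z = -z := by
      rw [div_eq_iff hz] at h1
      linarith
    have h3 : b / z = -2 * z := by linarith
    rw [div_eq_iff hz] at h3
    rw [h3]; ring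

/-- if the orbit of a nonzero point hits 0, the point squares to `-b`. -/
lemma hits_zero (hb : b ≠ 0) : ∀ (k : ℕ) (x : ℚ), x ≠ 0 →
    (fun w : ℚ => w + b / w)^[k] x = 0 → x ^ 2 = -b := by
  intro k
  induction k with
  | zero => intro x hx h0; exact absurd h0 hx
  | succ k ih =>
    intro x hx h0
    rw [iterate_succ_apply] at h0
    by_cases hgx : x + b / x = 0
    · have : b = -x^2 := by
        have := hgx
        field_simp at this
        linarith
      linarith
    · exfalso
      have h2 : (x + b / x) ^ 2 = -b := ih _ hgx (by exact h0)
      apply prime_not_rat_sq 5 (by norm_num) ((2*x - (x + b/x))/(x + b/x))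
      rw [div_pow, div_eq_iff (pow_ne_zero 2 hgx)]
      field_simp
      field_simp at h2
      push_cast
      linear_combination (-4) * h2

lemma lands_T {t : ℚ} (ht : t ≠ 0) (hbt : b = -2 * t^2) :
    ∀ (k : ℕ) (x : ℚ), x ≠ 0 →
      (fun w : ℚ => w + b / w)^[k] x ∈ ({t, -t, 2*t, -2*t} : Set ℚ) →
      x ∈ ({t, -t, 2*t, -2*t} : Set ℚ) := by
  intro k
  induction k with
  | zero => intro x _ h; exact h
  | succ k ih =>
    intro x hx h
    rw [iterate_succ_apply] at h
    have h0T : (0:ℚ) ∉ ({t, -t, 2*t, -2*t} : Set ℚ) := by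
      simp only [Set.mem_insert_iff, Set.mem_singleton_iff]
      push_neg
      refine ⟨ht.symm, ?_, ?_, ?_⟩ <;> intro h' <;> apply ht <;> linarith
    have hgx : x + b / x ≠ 0 := by
      intro h0
      rw [h0, g_iter_zero] at h
      exact h0T h
    have hT : x + b / x ∈ ({t, -t, 2*t, -2*t} : Set ℚ) := ih _ hgx h
    have hx2 : x ^ 2 + b = (x + b / x) * x := by field_simp
    simp only [Set.mem_insert_iff, Set.mem_singleton_iff] at hT ⊢
    rcases hT with hw | hw | hw | hw
    · rw [hw] at hx2
      have h0 : (x - 2*t) * (x + t) = 0 := by rw [hbt] at hx2; linear_combination hx2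
      rcases mul_eq_zero.1 h0 with h' | h'
      · right; right; left; linarith
      · right; left; linarith
    · rw [hw] at hx2
      have h0 : (x + 2*t) * (x - t) = 0 := by rw [hbt] at hx2; linear_combination hx2
      rcases mul_eq_zero.1 h0 with h' | h'
      · right; right; right; linarith
      · left; linarith
    · exfalso
      apply prime_not_rat_sq 3 (by norm_num) ((x - t)/t)
      rw [div_pow, div_eq_iff (pow_ne_zero 2 ht)]
      rw [hw, hbt] at hx2
      push_cast
      linear_combination hx2
    · exfalso
      apply prime_not_rat_sq 3 (by norm_num) ((x + t)/t)
      rw [div_pow, div_eq_iff (pow_ne_zero 2 ht)]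
      rw [hw, hbt] at hx2
      push_cast
      linear_combination hx2

/-- forward membership: a square root of `-b` is preperiodic (hits 0). -/
lemma mem_S_of_sq (hb : b ≠ 0) {s : ℚ} (hs : s ^ 2 = -b) :
    ∃ m n : ℕ, m < n ∧
      (fun w : ℚ => w + b / w)^[n] s = (fun w : ℚ => w + b / w)^[m] s := by
  have hs0 : s ≠ 0 := by intro h; rw [h] at hs; simp at hs; exact hb hs
  have e1 : s + b / s = 0 := by
    rw [show b = -s^2 by linarith]
    field_simp
    ring
  refine ⟨1, 2, by norm_num, ?_⟩
  rw [show (2:ℕ) = 1+1 from rfl, iterate_succ_apply, iterate_one]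
  rw [e1]
  norm_num

lemma g_t {t : ℚ} (ht : t ≠ 0) (hbt : b = -2 * t^2) :
    t + b / t = -t := by
  rw [hbt]; field_simp; ring

lemma g_2t {t : ℚ} (ht : t ≠ 0) (hbt : b = -2 * t^2) :
    2*t + b / (2*t) = t := by
  rw [hbt]; field_simp; ring

lemma mem_S_of_T (hb : b ≠ 0) {t : ℚ} (ht : t ≠ 0) (hbt : b = -2 * t^2) {z : ℚ}
    (hz : z ∈ ({t, -t, 2*t, -2*t} : Set ℚ)) :
    ∃ m n : ℕ, m < n ∧
      (fun w : ℚ => w + b / w)^[n] z = (fun w : ℚ => w + b / w)^[m] z := by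
  have ht' : (-t) ≠ 0 := neg_ne_zero.2 ht
  have hbt' : b = -2 * (-t)^2 := by rw [hbt]; ring
  have e1 := g_t b ht hbt
  have e1' := g_t b ht' hbt'
  rw [neg_neg] at e1'
  -- e1 : g t = -t, e1' : g (-t) = t
  have e2 : (fun w : ℚ => w + b / w)^[2] t = t := by
    rw [show (2:ℕ) = 1+1 from rfl, iterate_succ_apply, iterate_one]
    rw [e1]
    exact e1'
  have e2' : (fun w : ℚ => w + b / w)^[2] (-t) = -t := by
    rw [show (2:ℕ) = 1+1 from rfl, iterate_succ_apply, iterate_one]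
    rw [e1']
    exact e1
  simp only [Set.mem_insert_iff, Set.mem_singleton_iff] at hz
  rcases hz with rfl | rfl | rfl | rfl
  · exact ⟨0, 2, by norm_num, by rw [e2]; rfl⟩
  · exact ⟨0, 2, by norm_num, by rw [e2']; rfl⟩
  · refine ⟨1, 3, by norm_num, ?_⟩
    have e3 := g_2t b ht hbt
    rw [show (3:ℕ) = 2+1 from rfl, iterate_succ_apply, iterate_one]
    rw [e3, e2, ← e3]
  · refine ⟨1, 3, by norm_num, ?_⟩
    have e3 := g_2t b ht' hbt'
    rw [show -2*t = 2*(-t) by ring]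
    rw [show (3:ℕ) = 2+1 from rfl, iterate_succ_apply, iterate_one]
    rw [e3, e2', ← e3]

end

theorem card_preperiodic_add (b : ℚ) (hb : b ≠ 0) :
    {z : ℚ | z ≠ 0 ∧ ∃ m n : ℕ, m < n ∧
        (fun w : ℚ => w + b / w)^[n] z = (fun w : ℚ => w + b / w)^[m] z}.Finite ∧
      ({z : ℚ | z ≠ 0 ∧ ∃ m n : ℕ, m < n ∧
          (fun w : ℚ => w + b / w)^[n] z = (fun w : ℚ => w + b / w)^[m] z}.ncard = 0 ∨
        {z : ℚ | z ≠ 0 ∧ ∃ m n : ℕ, m < n ∧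
          (fun w : ℚ => w + b / w)^[n] z = (fun w : ℚ => w + b / w)^[m] z}.ncard = 2 ∨
        {z : ℚ | z ≠ 0 ∧ ∃ m n : ℕ, m < n ∧
          (fun w : ℚ => w + b / w)^[n] z = (fun w : ℚ => w + b / w)^[m] z}.ncard = 4) := by
  set S := {z : ℚ | z ≠ 0 ∧ ∃ m n : ℕ, m < n ∧
      (fun w : ℚ => w + b / w)^[n] z = (fun w : ℚ => w + b / w)^[m] z} with hSdef
  -- classification of members
  have hmem : ∀ z ∈ S, z ^ 2 = -b ∨
      ∃ t : ℚ, t ≠ 0 ∧ b = -2 * t^2 ∧ z ∈ ({t, -t, 2*t, -2*t} : Set ℚ) := by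
    rintro z ⟨hz, m, n, hmn, heq⟩
    set y := (fun w : ℚ => w + b / w)^[m] z with hy
    have hcy : (fun w : ℚ => w + b / w)^[n-m] y = y := by
      rw [hy, ← iterate_add_apply, show n - m + m = n by omega, heq]
    by_cases hy0 : y = 0
    · left
      exact hits_zero b hb m z hz (by rw [← hy, hy0])
    · right
      have hcircle : b = -2 * y^2 := cycle_eq b hb (by omega) hy0 hcy
      refine ⟨y, hy0, hcircle, ?_⟩
      apply lands_T b hy0 hcircle m z hz
      rw [← hy]
      exact Set.mem_insert _ _
  by_cases hA : ∃ s : ℚ, s ^ 2 = -b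
  · obtain ⟨s, hs⟩ := hA
    have hs0 : s ≠ 0 := by intro h; rw [h] at hs; simp at hs; exact hb hs
    have hSeq : S = {s, -s} := by
      ext z
      constructor
      · intro hzS
        rcases hmem z hzS with h1 | ⟨t, ht0, hbt, _⟩
        · have : (z - s) * (z + s) = 0 := by linear_combination h1 - hs
          rcases mul_eq_zero.1 this with h' | h'
          · left; linarith
          · right; show z = -s; linarith
        · exfalso
          apply prime_not_rat_sq 2 (by norm_num) (s / t)
          rw [div_pow, div_eq_iff (pow_ne_zero 2 ht0)]
          push_cast
          linear_combination hs - hbt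
      · intro hz
        rcases hz with rfl | hz
        · exact ⟨hs0, mem_S_of_sq b hb hs⟩
        · rw [Set.mem_singleton_iff] at hz
          subst hz
          exact ⟨neg_ne_zero.2 hs0, mem_S_of_sq b hb (by rw [neg_pow]; simpa using hs)⟩
    rw [hSeq]
    have hne : s ≠ -s := by intro h; apply hs0; linarith
    exact ⟨Set.toFinite _, Or.inr (Or.inl (Set.ncard_pair hne))⟩
  · by_cases hB : ∃ t : ℚ, b = -2 * t^2
    · obtain ⟨t, hbt⟩ := hB
      have ht0 : t ≠ 0 := by intro h; rw [h] at hbt; simp at hbt; exact hb hbt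
      have hSeq : S = {t, -t, 2*t, -2*t} := by
        ext z
        constructor
        · intro hzS
          rcases hmem z hzS with h1 | ⟨t', ht0', hbt', hzT⟩
          · exact absurd ⟨z, h1⟩ hA
          · have htt : (t' - t) * (t' + t) = 0 := by linear_combination (hbt' - hbt) / 2
            simp only [Set.mem_insert_iff, Set.mem_singleton_iff] at hzT ⊢
            rcases mul_eq_zero.1 htt with h' | h'
            · have : t' = t := by linarith
              subst this
              exact hzT
            · have : t' = -t := by linarith
              subst this
              rcases hzT with rfl | rfl | rfl | rfl
              · right; left; rfl
              · left; rw [neg_neg]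
              · right; right; right; ring
              · right; right; left; ring
        · intro hz
          have hzT : z ∈ ({t, -t, 2*t, -2*t} : Set ℚ) := hz
          have hz0 : z ≠ 0 := by
            simp only [Set.mem_insert_iff, Set.mem_singleton_iff] at hzT
            rcases hzT with rfl | rfl | rfl | rfl <;> intro h <;> apply ht0 <;> linarith
          exact ⟨hz0, mem_S_of_T b hb ht0 hbt hzT⟩
      rw [hSeq]
      have h1 : t ≠ -t := by intro h; apply ht0; linarith
      have h2 : t ≠ 2*t := by intro h; apply ht0; linarith
      have h3 : t ≠ -2*t := by intro h; apply ht0; linarith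
      have h4 : (-t) ≠ 2*t := by intro h; apply ht0; linarith
      have h5 : (-t) ≠ -2*t := by intro h; apply ht0; linarith
      have h6 : (2*t) ≠ -2*t := by intro h; apply ht0; linarith
      refine ⟨Set.toFinite _, Or.inr (Or.inr ?_)⟩
      have m1 : t ∉ ({-t, 2*t, -2*t} : Set ℚ) := by
        simp only [Set.mem_insert_iff, Set.mem_singleton_iff]
        push_neg
        refine ⟨?_, ?_, ?_⟩ <;> intro h' <;> apply ht0 <;> linarith
      have m2 : -t ∉ ({2*t, -2*t} : Set ℚ) := by
        simp only [Set.mem_insert_iff, Set.mem_singleton_iff]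
        push_neg
        refine ⟨?_, ?_⟩ <;> intro h' <;> apply ht0 <;> linarith
      rw [Set.ncard_insert_of_notMem m1,
        Set.ncard_insert_of_notMem m2, Set.ncard_pair h6]
    · have hSeq : S = ∅ := by
        ext z
        simp only [Set.mem_empty_iff_false, iff_false]
        intro hzS
        rcases hmem z hzS with h1 | ⟨t, ht0, hbt, _⟩
        · exact hA ⟨z, h1⟩
        · exact hB ⟨t, hbt⟩
      rw [hSeq]
      exact ⟨Set.finite_empty, Or.inl (by simp)⟩
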